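/- arXiv:2305.04813 — 2 statements merged into one kernel-verified Lean document; each statement's English description precedes it below -/
import Mathlib

section
/- Let u, f : ℝ^d → ℝ^d be C¹ and compactly supported with div u(x) = 0 for all x, and let A1, A2, A3, A4, A5 ∈ ℝ satisfy A1 + A2 − A3 = 0 and A5 − A4/2 = 1/2. Then ∫ ⟨f_m(x), u(x)⟩ dx = (1/2) ∫ (div f)(x)·⟨u(x), u(x)⟩ dx; that is, the kinetic-energy production ∫⟨f_m, u⟩ dx − ½∫(div f)⟨u, u⟩ dx of the mass-diffusion correction vanishes. -/
open MeasureTheory RealInnerProductSpace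

/-- `div v x = tr (Dv(x))`. -/
noncomputable def vdiv {d : ℕ}
    (v : EuclideanSpace ℝ (Fin d) → EuclideanSpace ℝ (Fin d))
    (x : EuclideanSpace ℝ (Fin d)) : ℝ :=
  LinearMap.trace ℝ _ (fderiv ℝ v x).toLinearMap

/-- The viscous momentum flux
`f_m = A1 (Df)*[u] + A2 Df[u] + A3 (Du)*[f] + A4 Du[f] + A5 (div f) u`. -/
noncomputable def viscFlux {d : ℕ} (A1 A2 A3 A4 A5 : ℝ)
    (u f : EuclideanSpace ℝ (Fin d) → EuclideanSpace ℝ (Fin d))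
    (x : EuclideanSpace ℝ (Fin d)) : EuclideanSpace ℝ (Fin d) :=
  A1 • (ContinuousLinearMap.adjoint (fderiv ℝ f x)) (u x)
    + A2 • (fderiv ℝ f x) (u x)
    + A3 • (ContinuousLinearMap.adjoint (fderiv ℝ u x)) (f x)
    + A4 • (fderiv ℝ u x) (f x)
    + A5 • (vdiv f x • u x)

section Aux

variable {d : ℕ}

local notation "E" => EuclideanSpace ℝ (Fin d)

lemma trace_clm (L : E →L[ℝ] E) :
    LinearMap.trace ℝ _ L.toLinearMap = ∑ i, L (EuclideanSpace.single i 1) i := by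
  rw [LinearMap.trace_eq_matrix_trace ℝ (EuclideanSpace.basisFun (Fin d) ℝ).toBasis]
  simp [Matrix.trace, Matrix.diag, LinearMap.toMatrix_apply]

lemma sum_single_smul (x : E) : ∑ i, x i • (EuclideanSpace.single i 1 : E) = x := by
  have := (EuclideanSpace.basisFun (Fin d) ℝ).toBasis.sum_repr x
  simpa using this

lemma vdiv_eq_sum (v : E → E) (x : E) :
    vdiv v x = ∑ i, fderiv ℝ v x (EuclideanSpace.single i 1) i := by
  rw [vdiv, trace_clm]

end Aux

section Aux2

variable {d : ℕ}

local notation "E" => EuclideanSpace ℝ (Fin d)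

/-- `∫ Dw(x)[v] dx = 0` for compactly supported `C¹` fields. -/
lemma integral_fderiv_apply_eq_zero {w : E → E} (hw : ContDiff ℝ 1 w)
    (hcw : HasCompactSupport w) (v : E) :
    ∫ x, fderiv ℝ w x v = 0 := by
  have h2 : Integrable (fun x : E => (fun _ : E => (1:ℝ)) x • fderiv ℝ w x v) volume := by
    simp only [one_smul]
    exact ((hw.continuous_fderiv one_ne_zero).clm_apply continuous_const).integrable_of_hasCompactSupport
      ((hcw.fderiv ℝ).mono (by
        intro x hx
        simp only [Function.mem_support] at hx ⊢
        intro h0; rw [h0] at hx; simp at hx))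
  have h1 : Integrable (fun x : E => (fderiv ℝ (fun _ : E => (1:ℝ)) x v) • w x) volume := by
    simp [fderiv_fun_const]
  have h3 : Integrable (fun x : E => (fun _ : E => (1:ℝ)) x • w x) volume := by
    simpa using hw.continuous.integrable_of_hasCompactSupport hcw
  have h := integral_smul_fderiv_eq_neg_fderiv_smul_of_integrable h1 h2 h3
    (fun x _ => differentiableAt_const _) (fun x _ => hw.differentiable one_ne_zero x)
  simpa [fderiv_fun_const] using h

/-- `∫ div w = 0` for compactly supported `C¹` fields. -/
lemma integral_vdiv_eq_zero {w : E → E} (hw : ContDiff ℝ 1 w)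
    (hcw : HasCompactSupport w) :
    ∫ x, vdiv w x = 0 := by
  have hint : ∀ v : E, Integrable (fun x => fderiv ℝ w x v) volume := by
    intro v
    exact ((hw.continuous_fderiv one_ne_zero).clm_apply continuous_const).integrable_of_hasCompactSupport
      ((hcw.fderiv ℝ).mono (by
        intro x hx
        simp only [Function.mem_support] at hx ⊢
        intro h0; rw [h0] at hx; simp at hx))
  calc ∫ x, vdiv w x
      = ∫ x, ∑ i, (EuclideanSpace.proj i : E →L[ℝ] ℝ) (fderiv ℝ w x (EuclideanSpace.single i 1)) := by
        simp only [vdiv_eq_sum]; rfl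
    _ = ∑ i, ∫ x, (EuclideanSpace.proj i : E →L[ℝ] ℝ) (fderiv ℝ w x (EuclideanSpace.single i 1)) := by
        apply integral_finset_sum
        intro i _
        exact ((EuclideanSpace.proj i : E →L[ℝ] ℝ).integrable_comp (hint _))
    _ = ∑ i : Fin d, (EuclideanSpace.proj i : E →L[ℝ] ℝ)
          (∫ x, fderiv ℝ w x (EuclideanSpace.single i 1)) := by
        refine Finset.sum_congr rfl fun i _ => ?_
        exact (EuclideanSpace.proj i : E →L[ℝ] ℝ).integral_comp_comm (hint _)
    _ = 0 := by
        simp [integral_fderiv_apply_eq_zero hw hcw]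

/-- product rule for the divergence. -/
lemma vdiv_smul {g : E → ℝ} {v : E → E} {x : E}
    (hg : DifferentiableAt ℝ g x) (hv : DifferentiableAt ℝ v x) :
    vdiv (fun y => g y • v y) x = fderiv ℝ g x (v x) + g x * vdiv v x := by
  rw [vdiv_eq_sum, vdiv_eq_sum, fderiv_fun_smul hg hv]
  have : ∑ i, (g x • fderiv ℝ v x + (fderiv ℝ g x).smulRight (v x)) (EuclideanSpace.single i 1) i
      = g x * ∑ i, fderiv ℝ v x (EuclideanSpace.single i 1) i
        + ∑ i, fderiv ℝ g x (EuclideanSpace.single i 1) * v x i := by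
    rw [Finset.mul_sum, ← Finset.sum_add_distrib]
    refine Finset.sum_congr rfl fun i _ => ?_
    simp [ContinuousLinearMap.smulRight_apply, mul_comm]
  rw [this]
  have h2 : ∑ i, fderiv ℝ g x (EuclideanSpace.single i 1) * v x i = fderiv ℝ g x (v x) := by
    conv_rhs => rw [← sum_single_smul (v x)]
    rw [map_sum]
    refine Finset.sum_congr rfl fun i _ => ?_
    rw [(fderiv ℝ g x).map_smul]; simp [mul_comm]
  rw [h2]; ring

end Aux2

/-- Part 1 of Theorem 2: if `A1 + A2 − A3 = 0` and `A5 − A4/2 = 1/2`, then the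
kinetic-energy production of the mass-diffusion correction vanishes:
`∫ ⟨f_m, u⟩ = ½ ∫ (div f) ⟨u, u⟩`. -/
theorem viscFlux_kinetic_energy {d : ℕ}
    (u f : EuclideanSpace ℝ (Fin d) → EuclideanSpace ℝ (Fin d))
    (hu : ContDiff ℝ 1 u) (hf : ContDiff ℝ 1 f)
    (hcu : HasCompactSupport u) (hcf : HasCompactSupport f)
    (hdiv : ∀ x, vdiv u x = 0)
    (A1 A2 A3 A4 A5 : ℝ)
    (h1 : A1 + A2 - A3 = 0) (h2 : A5 - A4/2 = 1/2) :
    ∫ x, ⟪viscFlux A1 A2 A3 A4 A5 u f x, u x⟫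
      = (1/2) * ∫ x, vdiv f x * ⟪u x, u x⟫ := by
  classical
  have hud : Differentiable ℝ u := hu.differentiable one_ne_zero
  have hfd : Differentiable ℝ f := hf.differentiable one_ne_zero
  have hcu' : Continuous (fderiv ℝ u) := hu.continuous_fderiv one_ne_zero
  have hcf' : Continuous (fderiv ℝ f) := hf.continuous_fderiv one_ne_zero
  set g1 : EuclideanSpace ℝ (Fin d) → ℝ := fun x => ⟪fderiv ℝ f x (u x), u x⟫ with hg1
  set g2 : EuclideanSpace ℝ (Fin d) → ℝ := fun x => ⟪f x, fderiv ℝ u x (u x)⟫ with hg2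
  set g3 : EuclideanSpace ℝ (Fin d) → ℝ := fun x => ⟪fderiv ℝ u x (f x), u x⟫ with hg3
  set g4 : EuclideanSpace ℝ (Fin d) → ℝ := fun x => vdiv f x * ⟪u x, u x⟫ with hg4
  -- continuity of vdiv f
  have hvdf : Continuous (fun x => vdiv f x) := by
    simp only [vdiv_eq_sum]
    refine continuous_finset_sum _ fun i _ => ?_
    exact (EuclideanSpace.proj i).continuous.comp (hcf'.clm_apply continuous_const)
  -- integrability of scalar functions supported in supp u
  have key : ∀ g : EuclideanSpace ℝ (Fin d) → ℝ, Continuous g →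
      (∀ x, u x = 0 → g x = 0) → Integrable g volume := fun g hg h0 =>
    hg.integrable_of_hasCompactSupport (hcu.mono (fun x hx => by
      simp only [Function.mem_support] at hx ⊢
      exact fun h => hx (h0 x h)))
  have hI1 : Integrable g1 volume :=
    key _ ((hcf'.clm_apply hu.continuous).inner hu.continuous)
      (fun x hx => by simp [hg1, hx])
  have hI2 : Integrable g2 volume :=
    key _ (hf.continuous.inner (hcu'.clm_apply hu.continuous))
      (fun x hx => by simp [hg2, hx])
  have hI3 : Integrable g3 volume :=
    key _ ((hcu'.clm_apply hf.continuous).inner hu.continuous)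
      (fun x hx => by simp [hg3, hx])
  have hI4 : Integrable g4 volume :=
    key _ (hvdf.mul (hu.continuous.inner hu.continuous))
      (fun x hx => by simp [hg4, hx])
  -- pointwise identity for the flux integrand
  have hpt : ∀ x, ⟪viscFlux A1 A2 A3 A4 A5 u f x, u x⟫
      = (A1 + A2) * g1 x + A3 * g2 x + A4 * g3 x + A5 * g4 x := by
    intro x
    simp only [viscFlux, inner_add_left, real_inner_smul_left,
      ContinuousLinearMap.adjoint_inner_left, hg1, hg2, hg3, hg4]
    rw [real_inner_comm (u x) ((fderiv ℝ f x) (u x))]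
    ring
  -- relation 1 : ∫ g1 + ∫ g2 = 0
  have R1 : (∫ x, g1 x) + (∫ x, g2 x) = 0 := by
    have hw2 : ContDiff ℝ 1 (fun y => ⟪f y, u y⟫ • u y) :=
      (ContDiff.inner ℝ hf hu).smul hu
    have hcw2 : HasCompactSupport (fun y => ⟪f y, u y⟫ • u y) :=
      hcu.mono (fun x hx => by
        simp only [Function.mem_support] at hx ⊢
        exact fun h => hx (by simp [h]))
    have h0 := integral_vdiv_eq_zero hw2 hcw2
    have heq : ∀ x, vdiv (fun y => ⟪f y, u y⟫ • u y) x = g1 x + g2 x := by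
      intro x
      rw [vdiv_smul ((hfd x).inner ℝ (hud x)) (hud x)]
      rw [fderiv_inner_apply ℝ (hfd x) (hud x) (u x), hdiv x]
      simp only [hg1, hg2]
      ring
    rw [funext heq, integral_add hI1 hI2] at h0
    exact h0
  -- relation 2 : 2 ∫ g3 + ∫ g4 = 0
  have R2 : 2 * (∫ x, g3 x) + (∫ x, g4 x) = 0 := by
    have hw1 : ContDiff ℝ 1 (fun y => ⟪u y, u y⟫ • f y) :=
      (ContDiff.inner ℝ hu hu).smul hf
    have hcw1 : HasCompactSupport (fun y => ⟪u y, u y⟫ • f y) :=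
      hcf.mono (fun x hx => by
        simp only [Function.mem_support] at hx ⊢
        exact fun h => hx (by simp [h]))
    have h0 := integral_vdiv_eq_zero hw1 hcw1
    have heq : ∀ x, vdiv (fun y => ⟪u y, u y⟫ • f y) x = 2 * g3 x + g4 x := by
      intro x
      rw [vdiv_smul ((hud x).inner ℝ (hud x)) (hfd x)]
      rw [fderiv_inner_apply ℝ (hud x) (hud x) (f x)]
      simp only [hg3, hg4, real_inner_comm ((fderiv ℝ u x) (f x)) (u x)]
      ring
    rw [funext heq, integral_add (hI3.const_mul 2) hI4, integral_const_mul] at h0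
    exact h0
  -- put everything together
  have hfun : (fun x => ⟪viscFlux A1 A2 A3 A4 A5 u f x, u x⟫)
      = fun x => (A1 + A2) * g1 x + A3 * g2 x + A4 * g3 x + A5 * g4 x := funext hpt
  have S : ∫ x, ((A1 + A2) * g1 x + A3 * g2 x + A4 * g3 x + A5 * g4 x)
      = (A1 + A2) * (∫ x, g1 x) + A3 * (∫ x, g2 x) + A4 * (∫ x, g3 x)
        + A5 * (∫ x, g4 x) := by
    have hIa : Integrable (fun x => (A1 + A2) * g1 x + A3 * g2 x) volume :=
      (hI1.const_mul _).add (hI2.const_mul _)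
    have hIb : Integrable (fun x => (A1 + A2) * g1 x + A3 * g2 x + A4 * g3 x) volume :=
      hIa.add (hI3.const_mul _)
    rw [integral_add hIb (hI4.const_mul _),
      integral_add hIa (hI3.const_mul _),
      integral_add (hI1.const_mul _) (hI2.const_mul _),
      integral_const_mul, integral_const_mul, integral_const_mul, integral_const_mul]
  rw [hfun, S]
  have e2 : (∫ x, g2 x) = -(∫ x, g1 x) := by linarith
  have e3 : (∫ x, g3 x) = -(1/2) * (∫ x, g4 x) := by linarith
  rw [e2, e3, show A3 = A1 + A2 by linarith, show A5 = 1/2 + A4/2 by linarith]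
  ring
end

section
/- Let u, f : ℝ^d → ℝ^d be C¹ and compactly supported with div u(x) = 0 for all x, and let A1, A2, A3, A4, A5 ∈ ℝ satisfy A1 − A3 = 0 and A5 − A4 = 0. Then for every constant vector e ∈ ℝ^d: ∫ ⟨f_m(x), e⟩ dx = 0; that is, the mass-diffusion correction f_m produces no net momentum. -/
open MeasureTheory RealInnerProductSpace

lemma trace_eq_sum_inner_single {d : ℕ}
    (A : EuclideanSpace ℝ (Fin d) →L[ℝ] EuclideanSpace ℝ (Fin d)) :
    LinearMap.trace ℝ _ A.toLinearMap
      = ∑ i, ⟪A (EuclideanSpace.single i 1), EuclideanSpace.single i 1⟫ := by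
  classical
  rw [LinearMap.trace_eq_matrix_trace ℝ (EuclideanSpace.basisFun (Fin d) ℝ).toBasis,
    Matrix.trace]
  refine Finset.sum_congr rfl fun i _ => ?_
  rw [Matrix.diag_apply, LinearMap.toMatrix_apply]
  simp [EuclideanSpace.basisFun_apply, EuclideanSpace.inner_single_right]

lemma integral_fderiv_apply_zero {d : ℕ}
    (g : EuclideanSpace ℝ (Fin d) → ℝ) (hg : ContDiff ℝ 1 g)
    (hcg : HasCompactSupport g) (v : EuclideanSpace ℝ (Fin d)) :
    ∫ x, fderiv ℝ g x v = 0 := by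
  have hcont : Continuous fun x => fderiv ℝ g x v :=
    (hg.continuous_fderiv one_ne_zero).clm_apply continuous_const
  have h := integral_mul_fderiv_eq_neg_fderiv_mul_of_integrable
    (μ := volume) (f := g) (g := fun _ => (1:ℝ)) (v := v)
    (by simpa using (hcont.integrable_of_hasCompactSupport (hcg.fderiv_apply ℝ v)))
    (by simp [fderiv_const])
    (by simpa using (hg.continuous.integrable_of_hasCompactSupport hcg))
    (fun x _ => hg.differentiable one_ne_zero x) (fun x _ => differentiableAt_const (1:ℝ))
  simp [fderiv_const] at h
  linarith

/-- clm applied to a vector, expanded along the standard basis. -/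
lemma clm_apply_sum {d : ℕ} (L : EuclideanSpace ℝ (Fin d) →L[ℝ] ℝ)
    (y : EuclideanSpace ℝ (Fin d)) :
    L y = ∑ i, y i * L (EuclideanSpace.single i 1) := by
  conv_lhs => rw [← (EuclideanSpace.basisFun (Fin d) ℝ).sum_repr y]
  rw [map_sum]
  simp [EuclideanSpace.basisFun_apply, EuclideanSpace.basisFun_repr, smul_eq_mul]

/-- Part 2 of Theorem 2: if `A1 − A3 = 0` and `A5 − A4 = 0`, the mass-diffusion
correction `f_m` produces no net momentum. -/
theorem viscFlux_momentum {d : ℕ}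
    (u f : EuclideanSpace ℝ (Fin d) → EuclideanSpace ℝ (Fin d))
    (hu : ContDiff ℝ 1 u) (hf : ContDiff ℝ 1 f)
    (hcu : HasCompactSupport u) (hcf : HasCompactSupport f)
    (hdiv : ∀ x, vdiv u x = 0)
    (A1 A2 A3 A4 A5 : ℝ)
    (h1 : A1 - A3 = 0) (h2 : A5 - A4 = 0)
    (e : EuclideanSpace ℝ (Fin d)) :
    ∫ x, ⟪viscFlux A1 A2 A3 A4 A5 u f x, e⟫ = 0 := by
  classical
  have hA3 : A3 = A1 := by linarith
  have hA5 : A5 = A4 := by linarith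
  have hdu : Differentiable ℝ u := hu.differentiable one_ne_zero
  have hdf : Differentiable ℝ f := hf.differentiable one_ne_zero
  set b : Fin d → EuclideanSpace ℝ (Fin d) := fun i => EuclideanSpace.single i 1 with hb
  set G : EuclideanSpace ℝ (Fin d) → ℝ := fun y => ⟪u y, f y⟫ with hG
  set Φ : EuclideanSpace ℝ (Fin d) → ℝ := fun y => ⟪f y, e⟫ with hΦ
  set Ψ : EuclideanSpace ℝ (Fin d) → ℝ := fun y => ⟪u y, e⟫ with hΨ
  set U : Fin d → EuclideanSpace ℝ (Fin d) → ℝ := fun i y => ⟪u y, b i⟫ with hU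
  set V : Fin d → EuclideanSpace ℝ (Fin d) → ℝ := fun i y => ⟪f y, b i⟫ with hV
  -- smoothness
  have hGc : ContDiff ℝ 1 G := hu.inner ℝ hf
  have hΦc : ContDiff ℝ 1 Φ := hf.inner ℝ contDiff_const
  have hΨc : ContDiff ℝ 1 Ψ := hu.inner ℝ contDiff_const
  have hUc : ∀ i, ContDiff ℝ 1 (U i) := fun i => hu.inner ℝ contDiff_const
  have hVc : ∀ i, ContDiff ℝ 1 (V i) := fun i => hf.inner ℝ contDiff_const
  -- compact support
  have hGs : HasCompactSupport G := by
    apply hcu.mono'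
    refine (Function.support_subset_iff'.mpr ?_).trans subset_closure
    intro x hx
    have h0 : u x = 0 := Function.notMem_support.mp hx
    simp [hG, h0]
  have hΦs : HasCompactSupport Φ :=
    hcf.comp_left (g := fun y => ⟪y, e⟫) (inner_zero_left e)
  have hΨs : HasCompactSupport Ψ :=
    hcu.comp_left (g := fun y => ⟪y, e⟫) (inner_zero_left e)
  have hUs : ∀ i, HasCompactSupport (U i) := fun i =>
    hcu.comp_left (g := fun y => ⟪y, b i⟫) (inner_zero_left (b i))
  have hVs : ∀ i, HasCompactSupport (V i) := fun i =>
    hcf.comp_left (g := fun y => ⟪y, b i⟫) (inner_zero_left (b i))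
  -- fderiv computations
  have hdΦ : ∀ x w, fderiv ℝ Φ x w = ⟪fderiv ℝ f x w, e⟫ := by
    intro x w
    rw [hΦ, fderiv_inner_apply ℝ (hdf x) (differentiableAt_const e) w]
    simp
  have hdΨ : ∀ x w, fderiv ℝ Ψ x w = ⟪fderiv ℝ u x w, e⟫ := by
    intro x w
    rw [hΨ, fderiv_inner_apply ℝ (hdu x) (differentiableAt_const e) w]
    simp
  have hdU : ∀ i x w, fderiv ℝ (U i) x w = ⟪fderiv ℝ u x w, b i⟫ := by
    intro i x w
    rw [hU, fderiv_inner_apply ℝ (hdu x) (differentiableAt_const (b i)) w]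
    simp
  have hdV : ∀ i x w, fderiv ℝ (V i) x w = ⟪fderiv ℝ f x w, b i⟫ := by
    intro i x w
    rw [hV, fderiv_inner_apply ℝ (hdf x) (differentiableAt_const (b i)) w]
    simp
  have hdG : ∀ x, fderiv ℝ G x e = ⟪u x, fderiv ℝ f x e⟫ + ⟪fderiv ℝ u x e, f x⟫ := by
    intro x
    rw [hG, fderiv_inner_apply ℝ (hdu x) (hdf x) e]
  -- divergence as a sum of coordinates
  have hvd : ∀ (v : EuclideanSpace ℝ (Fin d) → EuclideanSpace ℝ (Fin d)) x,
      vdiv v x = ∑ i, ⟪fderiv ℝ v x (b i), b i⟫ := by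
    intro v x
    rw [vdiv, trace_eq_sum_inner_single]
  -- the pointwise identity
  have hpt : ∀ x, ⟪viscFlux A1 A2 A3 A4 A5 u f x, e⟫
      = A1 * fderiv ℝ G x e
        + A2 * ∑ i, U i x * fderiv ℝ Φ x (b i)
        + A4 * ∑ i, V i x * fderiv ℝ Ψ x (b i)
        + A4 * (vdiv f x * Ψ x) := by
    intro x
    have e2 : (fderiv ℝ f x) (u x) = ∑ i, U i x • (fderiv ℝ f x) (b i) := by
      conv_lhs => rw [← (EuclideanSpace.basisFun (Fin d) ℝ).sum_repr (u x)]
      rw [map_sum]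
      refine Finset.sum_congr rfl fun i _ => ?_
      simp [hU, EuclideanSpace.basisFun_apply, EuclideanSpace.basisFun_repr,
        EuclideanSpace.inner_single_right, hb]
    have e4 : (fderiv ℝ u x) (f x) = ∑ i, V i x • (fderiv ℝ u x) (b i) := by
      conv_lhs => rw [← (EuclideanSpace.basisFun (Fin d) ℝ).sum_repr (f x)]
      rw [map_sum]
      refine Finset.sum_congr rfl fun i _ => ?_
      simp [hV, EuclideanSpace.basisFun_apply, EuclideanSpace.basisFun_repr,
        EuclideanSpace.inner_single_right, hb]
    rw [viscFlux, hA3, hA5]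
    rw [inner_add_left, inner_add_left, inner_add_left, inner_add_left,
      real_inner_smul_left, real_inner_smul_left, real_inner_smul_left,
      real_inner_smul_left, real_inner_smul_left,
      ContinuousLinearMap.adjoint_inner_left, ContinuousLinearMap.adjoint_inner_left,
      e2, e4, sum_inner, sum_inner, hdG x, real_inner_smul_left]
    simp only [real_inner_smul_left]
    have h2' : ∀ i, U i x * ⟪(fderiv ℝ f x) (b i), e⟫ = U i x * fderiv ℝ Φ x (b i) := by
      intro i; rw [hdΦ]
    have h4' : ∀ i, V i x * ⟪(fderiv ℝ u x) (b i), e⟫ = V i x * fderiv ℝ Ψ x (b i) := by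
      intro i; rw [hdΨ]
    rw [Finset.sum_congr rfl fun i _ => h2' i, Finset.sum_congr rfl fun i _ => h4' i]
    rw [real_inner_comm (f x) ((fderiv ℝ u x) e)]
    ring
  -- integrability helpers
  have mkInt : ∀ (g : EuclideanSpace ℝ (Fin d) → ℝ), Continuous g → HasCompactSupport g
      → Integrable g volume := fun g hg hcg => hg.integrable_of_hasCompactSupport hcg
  have fdcont : ∀ (g : EuclideanSpace ℝ (Fin d) → ℝ), ContDiff ℝ 1 g →
      ∀ w, Continuous fun x => fderiv ℝ g x w := fun g hg w =>
    (hg.continuous_fderiv one_ne_zero).clm_apply continuous_const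
  -- integration by parts for the coordinate terms
  have ibp : ∀ (a c : EuclideanSpace ℝ (Fin d) → ℝ), ContDiff ℝ 1 a → ContDiff ℝ 1 c →
      HasCompactSupport a → HasCompactSupport c → ∀ w,
      ∫ x, a x * fderiv ℝ c x w = - ∫ x, fderiv ℝ a x w * c x := by
    intro a c ha hc hsa hsc w
    exact integral_mul_fderiv_eq_neg_fderiv_mul_of_integrable
      (mkInt _ (((fdcont a ha w)).mul hc.continuous) (((hsa.fderiv_apply ℝ w)).mul_right))
      (mkInt _ (ha.continuous.mul (fdcont c hc w)) (hsa.mul_right))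
      (mkInt _ (ha.continuous.mul hc.continuous) (hsa.mul_right))
      (fun x _ => ha.differentiable one_ne_zero x) (fun x _ => hc.differentiable one_ne_zero x)
  -- integrals of the individual pieces
  have I1 : ∫ x, fderiv ℝ G x e = 0 := integral_fderiv_apply_zero G hGc hGs e
  have I2 : ∫ x, (∑ i, U i x * fderiv ℝ Φ x (b i)) = 0 := by
    rw [integral_finset_sum _ (fun i _ => mkInt (fun x => U i x * fderiv ℝ Φ x (b i))
      ((hUc i).continuous.mul (fdcont Φ hΦc (b i))) ((hUs i).mul_right))]
    have : ∀ i ∈ Finset.univ, ∫ x, U i x * fderiv ℝ Φ x (b i)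
        = - ∫ x, fderiv ℝ (U i) x (b i) * Φ x :=
      fun i _ => ibp (U i) Φ (hUc i) hΦc (hUs i) hΦs (b i)
    rw [Finset.sum_congr rfl this, Finset.sum_neg_distrib,
      ← integral_finset_sum _ (fun i _ => mkInt (fun x => fderiv ℝ (U i) x (b i) * Φ x)
        ((fdcont (U i) (hUc i) (b i)).mul hΦc.continuous)
        (((hUs i).fderiv_apply ℝ (b i)).mul_right))]
    have hz : ∀ x, (∑ i, fderiv ℝ (U i) x (b i) * Φ x) = 0 := by
      intro x
      have : (∑ i, fderiv ℝ (U i) x (b i) * Φ x) = vdiv u x * Φ x := by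
        rw [hvd u x, Finset.sum_mul]
        refine Finset.sum_congr rfl fun i _ => ?_
        rw [hdU]
      rw [this, hdiv x, zero_mul]
    simp [hz]
  have I3 : ∫ x, (∑ i, V i x * fderiv ℝ Ψ x (b i)) = - ∫ x, vdiv f x * Ψ x := by
    rw [integral_finset_sum _ (fun i _ => mkInt (fun x => V i x * fderiv ℝ Ψ x (b i))
      ((hVc i).continuous.mul (fdcont Ψ hΨc (b i))) ((hVs i).mul_right))]
    have : ∀ i ∈ Finset.univ, ∫ x, V i x * fderiv ℝ Ψ x (b i)
        = - ∫ x, fderiv ℝ (V i) x (b i) * Ψ x :=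
      fun i _ => ibp (V i) Ψ (hVc i) hΨc (hVs i) hΨs (b i)
    rw [Finset.sum_congr rfl this, Finset.sum_neg_distrib,
      ← integral_finset_sum _ (fun i _ => mkInt (fun x => fderiv ℝ (V i) x (b i) * Ψ x)
        ((fdcont (V i) (hVc i) (b i)).mul hΨc.continuous)
        (((hVs i).fderiv_apply ℝ (b i)).mul_right))]
    congr 1
    refine integral_congr_ae (Filter.Eventually.of_forall fun x => ?_)
    simp only []
    rw [hvd f x, Finset.sum_mul]
    refine Finset.sum_congr rfl fun i _ => ?_
    rw [hdV]
  -- continuity / integrability of the pieces for splitting the integral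
  have hvdivf_cont : Continuous fun x => vdiv f x * Ψ x := by
    have : Continuous (vdiv f) := by
      have : vdiv f = fun x => ∑ i, ⟪fderiv ℝ f x (b i), b i⟫ := funext fun x => hvd f x
      rw [this]
      exact continuous_finset_sum _ fun i _ =>
        ((hf.continuous_fderiv one_ne_zero).clm_apply continuous_const).inner continuous_const
    exact this.mul hΨc.continuous
  have hvdivf_supp : HasCompactSupport fun x => vdiv f x * Ψ x := hΨs.mul_left
  have int1 : Integrable (fun x => fderiv ℝ G x e) volume :=
    mkInt _ (fdcont G hGc e) (hGs.fderiv_apply ℝ e)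
  have int2 : Integrable (fun x => ∑ i, U i x * fderiv ℝ Φ x (b i)) volume :=
    integrable_finset_sum _ (fun i _ => mkInt _
      ((hUc i).continuous.mul (fdcont Φ hΦc (b i))) ((hUs i).mul_right))
  have int3 : Integrable (fun x => ∑ i, V i x * fderiv ℝ Ψ x (b i)) volume :=
    integrable_finset_sum _ (fun i _ => mkInt _
      ((hVc i).continuous.mul (fdcont Ψ hΨc (b i))) ((hVs i).mul_right))
  have int4 : Integrable (fun x => vdiv f x * Ψ x) volume :=
    mkInt _ hvdivf_cont hvdivf_supp
  calc ∫ x, ⟪viscFlux A1 A2 A3 A4 A5 u f x, e⟫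
      = ∫ x, (A1 * fderiv ℝ G x e
        + A2 * ∑ i, U i x * fderiv ℝ Φ x (b i)
        + A4 * ∑ i, V i x * fderiv ℝ Ψ x (b i)
        + A4 * (vdiv f x * Ψ x)) := by
        exact integral_congr_ae (Filter.Eventually.of_forall hpt)
    _ = (∫ x, (A1 * fderiv ℝ G x e
          + A2 * ∑ i, U i x * fderiv ℝ Φ x (b i)
          + A4 * ∑ i, V i x * fderiv ℝ Ψ x (b i)))
        + ∫ x, A4 * (vdiv f x * Ψ x) :=
        integral_add (by exact ((int1.const_mul A1).add (int2.const_mul A2)).add (int3.const_mul A4)) (int4.const_mul A4)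
    _ = ((∫ x, (A1 * fderiv ℝ G x e
          + A2 * ∑ i, U i x * fderiv ℝ Φ x (b i)))
        + ∫ x, A4 * ∑ i, V i x * fderiv ℝ Ψ x (b i))
        + ∫ x, A4 * (vdiv f x * Ψ x) := by
        rw [integral_add (by exact (int1.const_mul A1).add (int2.const_mul A2))
          (int3.const_mul A4)]
    _ = (((∫ x, A1 * fderiv ℝ G x e)
          + ∫ x, A2 * ∑ i, U i x * fderiv ℝ Φ x (b i))
        + ∫ x, A4 * ∑ i, V i x * fderiv ℝ Ψ x (b i))
        + ∫ x, A4 * (vdiv f x * Ψ x) := by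
        rw [integral_add (int1.const_mul A1) (int2.const_mul A2)]
    _ = A1 * (∫ x, fderiv ℝ G x e)
        + A2 * (∫ x, ∑ i, U i x * fderiv ℝ Φ x (b i))
        + A4 * (∫ x, ∑ i, V i x * fderiv ℝ Ψ x (b i))
        + A4 * (∫ x, vdiv f x * Ψ x) := by
        rw [integral_const_mul, integral_const_mul, integral_const_mul, integral_const_mul]
    _ = 0 := by
        rw [I1, I2, I3]; ring
end
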